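/- Let ℓ > 0 and let c, c' ∈ L_ℓ with c ≠ c'. Then the open truncated-octahedron cells T(c) and T(c') are disjoint: T(c) ∩ T(c') = ∅. -/

import Mathlib

noncomputable section

abbrev V3 := EuclideanSpace ℝ (Fin 3)

/-- The body-centered cubic lattice L_ℓ = {ℓn : n ∈ ℤ³} ∪ {ℓn + (ℓ/2,ℓ/2,ℓ/2) : n ∈ ℤ³}. -/
def latt (ℓ : ℝ) : Set V3 :=
  {c | ∃ n : Fin 3 → ℤ, (∀ i, c i = ℓ * n i) ∨ (∀ i, c i = ℓ * n i + ℓ / 2)}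

/-- The open truncated-octahedron cell with center c and parameter ℓ. -/
def Tcell (ℓ : ℝ) (c : V3) : Set V3 :=
  {ξ | (∀ i, |ξ i - c i| < ℓ / 2) ∧
    |ξ 0 - c 0| + |ξ 1 - c 1| + |ξ 2 - c 2| < (3 / 4) * ℓ}

/-- Distinct truncated-octahedron cells centered at lattice points are disjoint. -/
theorem truncated_octahedron_cells_disjoint
    (ℓ : ℝ) (hℓ : 0 < ℓ) (c c' : V3) (hc : c ∈ latt ℓ) (hc' : c' ∈ latt ℓ)
    (hne : c ≠ c') :
    Tcell ℓ c ∩ Tcell ℓ c' = ∅ := by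
  have half : ∀ k : ℤ, (ℓ / 2 : ℝ) ≤ |ℓ * k + ℓ / 2| := by
    intro k
    rcases le_or_gt 0 k with hk | hk
    · have : (0:ℝ) ≤ k := by exact_mod_cast hk
      have : ℓ / 2 ≤ ℓ * k + ℓ / 2 := by nlinarith
      calc (ℓ/2:ℝ) ≤ ℓ * k + ℓ / 2 := this
        _ ≤ |ℓ * k + ℓ / 2| := le_abs_self _
    · have hk' : (k:ℝ) ≤ -1 := by have : k ≤ -1 := by omega
                                  exact_mod_cast this
      have : ℓ * k + ℓ / 2 ≤ -(ℓ/2) := by nlinarith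
      calc (ℓ/2:ℝ) ≤ -(ℓ * k + ℓ / 2) := by linarith
        _ ≤ |ℓ * k + ℓ / 2| := neg_le_abs _
  ext ξ
  simp only [Set.mem_inter_iff, Set.mem_empty_iff_false, iff_false]
  rintro ⟨⟨h1, h1s⟩, ⟨h2, h2s⟩⟩
  have tri : ∀ i : Fin 3, |c i - c' i| ≤ |ξ i - c i| + |ξ i - c' i| := by
    intro i
    calc |c i - c' i| = |(ξ i - c' i) - (ξ i - c i)| := by ring_nf
      _ ≤ |ξ i - c' i| + |ξ i - c i| := abs_sub _ _
      _ = |ξ i - c i| + |ξ i - c' i| := by ring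
  obtain ⟨n, hn⟩ := hc
  obtain ⟨m, hm⟩ := hc'
  -- mixed case helper
  have mixed : (∀ i, |c i - c' i| ≥ ℓ / 2) → False := by
    intro h
    have s1 : |c 0 - c' 0| + |c 1 - c' 1| + |c 2 - c' 2|
        ≤ (|ξ 0 - c 0| + |ξ 1 - c 1| + |ξ 2 - c 2|)
          + (|ξ 0 - c' 0| + |ξ 1 - c' 1| + |ξ 2 - c' 2|) := by
      have := tri 0; have := tri 1; have := tri 2; linarith
    have := h 0; have := h 1; have := h 2
    linarith
  -- same sublattice helper
  have same : (∀ i, ∃ k : ℤ, c i - c' i = ℓ * k) → False := by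
    intro h
    obtain ⟨i, hi⟩ : ∃ i, c i ≠ c' i := by
      by_contra hx; push_neg at hx; exact hne (by ext j; exact hx j)
    obtain ⟨k, hk⟩ := h i
    have hk0 : k ≠ 0 := by
      rintro rfl
      apply hi
      have : c i - c' i = 0 := by simpa using hk
      linarith
    have : (1:ℝ) ≤ |(k:ℝ)| := by
      have := Int.one_le_abs hk0
      calc (1:ℝ) ≤ (|k| : ℤ) := by exact_mod_cast this
        _ = |(k:ℝ)| := by push_cast; ring
    have hge : ℓ ≤ |c i - c' i| := by
      rw [hk, abs_mul, abs_of_pos hℓ]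
      nlinarith
    have := tri i; have := h1 i; have := h2 i
    linarith
  rcases hn with hn | hn <;> rcases hm with hm | hm
  · exact same fun i => ⟨n i - m i, by rw [hn i, hm i]; push_cast; ring⟩
  · refine mixed fun i => ?_
    have : c i - c' i = -(ℓ * ((m i - n i : ℤ) : ℝ) + ℓ / 2) := by
      rw [hn i, hm i]; push_cast; ring
    rw [this, abs_neg]
    exact half _
  · refine mixed fun i => ?_
    have : c i - c' i = ℓ * ((n i - m i : ℤ) : ℝ) + ℓ / 2 := by
      rw [hn i, hm i]; push_cast; ring
    rw [this]
    exact half _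
  · exact same fun i => ⟨n i - m i, by rw [hn i, hm i]; push_cast; ring⟩
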